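/- Work on a probability space (Ω, 𝒜, P) equipped with a filtration (ℱ_k)_{k∈ℕ} of sub-σ-algebras of 𝒜, and let p ∈ (0,1]. For each k ∈ ℕ let W_k be a {0,1}-valued ℱ_k-measurable random variable, let E_k ∈ 𝒜 be an event with P[E_k | ℱ_k] ≥ p almost surely, and let S_k ∈ 𝒜 be an event. Let N : Ω → ℕ ∪ {∞} satisfy {k < N} ∈ ℱ_k for every k, and assume that almost surely: (a) for every k < N, W_k·1_{E_k} ≤ 1_{S_k}; and (b) Σ_{k<N} W_k·1_{S_k} ≤ N/2. Then E[Σ_{k<N} W_k] ≤ E[N]/(2p), where sums and expectations of nonnegative quantities take values in [0,∞]. -/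

import Mathlib

open MeasureTheory
open scoped ENNReal

/-- The bound (3.21) of the paper: if every accurate iteration with `W_k = 1` before `N`
is successful and at most half of the iterations before `N` can be successful with
`W_k = 1`, then `E[Σ_{k<N} W_k] ≤ E[N]/(2p)`. -/
theorem expected_small_radius_le
    {Ω : Type*} {mΩ : MeasurableSpace Ω} (μ : Measure Ω) [IsProbabilityMeasure μ]
    (ℱ : Filtration ℕ mΩ) (p : ℝ) (hp0 : 0 < p) (hp1 : p ≤ 1)
    (W : ℕ → Ω → ℝ)
    (hW01 : ∀ k ω, W k ω = 0 ∨ W k ω = 1)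
    (hWmeas : ∀ k, Measurable[ℱ k] (W k))
    (E : ℕ → Set Ω) (hE : ∀ k, MeasurableSet (E k))
    (hEp : ∀ k, ∀ᵐ ω ∂μ,
      p ≤ (μ[(E k).indicator (fun _ => (1 : ℝ)) | ℱ k]) ω)
    (S : ℕ → Set Ω) (hS : ∀ k, MeasurableSet (S k))
    (N : Ω → ℕ∞)
    (hN : ∀ k, MeasurableSet[ℱ k] {ω | (k : ℕ∞) < N ω})
    (ha : ∀ᵐ ω ∂μ, ∀ k : ℕ, (k : ℕ∞) < N ω →
      W k ω * (E k).indicator (fun _ => (1 : ℝ)) ω ≤ (S k).indicator (fun _ => (1 : ℝ)) ω)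
    (hb : ∀ᵐ ω ∂μ,
      (∑' (k : ℕ), ({ω' | (k : ℕ∞) < N ω'}.indicator (fun _ => (1 : ℝ≥0∞)) ω) *
          ENNReal.ofReal (W k ω) * ((S k).indicator (fun _ => (1 : ℝ≥0∞)) ω))
        ≤ (N ω : ℝ≥0∞) / 2) :
    (∫⁻ ω, ∑' (k : ℕ), ({ω' | (k : ℕ∞) < N ω'}.indicator (fun _ => (1 : ℝ≥0∞)) ω) *
        ENNReal.ofReal (W k ω) ∂μ)
      ≤ (∫⁻ ω, (N ω : ℝ≥0∞) ∂μ) / ENNReal.ofReal (2 * p) := by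
  classical
  set A : ℕ → Set Ω := fun k => {ω | (k : ℕ∞) < N ω} ∩ {ω | W k ω = 1} with hA_def
  have hAmeasF : ∀ k, MeasurableSet[ℱ k] (A k) := fun k =>
    (hN k).inter (hWmeas k (measurableSet_singleton 1))
  have hAmeas : ∀ k, MeasurableSet (A k) := fun k => ℱ.le k _ (hAmeasF k)
  -- pointwise identities
  have hpt : ∀ (k : ℕ) (ω : Ω), ({ω' | (k : ℕ∞) < N ω'}.indicator (fun _ => (1 : ℝ≥0∞)) ω) *
      ENNReal.ofReal (W k ω) = (A k).indicator (fun _ => (1 : ℝ≥0∞)) ω := by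
    intro k ω
    rcases hW01 k ω with h | h <;>
      simp [Set.indicator_apply, hA_def, h, Set.mem_setOf_eq, Set.mem_inter_iff]
  have hpt2 : ∀ (k : ℕ) (ω : Ω), ({ω' | (k : ℕ∞) < N ω'}.indicator (fun _ => (1 : ℝ≥0∞)) ω) *
      ENNReal.ofReal (W k ω) * ((S k).indicator (fun _ => (1 : ℝ≥0∞)) ω)
      = (A k ∩ S k).indicator (fun _ => (1 : ℝ≥0∞)) ω := by
    intro k ω
    rw [hpt k ω]
    by_cases hSω : ω ∈ S k <;> by_cases hAω : ω ∈ A k <;>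
      simp [Set.indicator_apply, hSω, hAω]
  -- LHS = Σ μ (A k)
  have hLHS : (∫⁻ ω, ∑' (k : ℕ), ({ω' | (k : ℕ∞) < N ω'}.indicator (fun _ => (1 : ℝ≥0∞)) ω) *
      ENNReal.ofReal (W k ω) ∂μ) = ∑' k, μ (A k) := by
    have h1 : (∫⁻ ω, ∑' (k : ℕ), ({ω' | (k : ℕ∞) < N ω'}.indicator (fun _ => (1 : ℝ≥0∞)) ω) *
        ENNReal.ofReal (W k ω) ∂μ)
        = ∫⁻ ω, ∑' (k : ℕ), (A k).indicator (fun _ => (1 : ℝ≥0∞)) ω ∂μ := by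
      congr 1; funext ω; exact tsum_congr fun k => hpt k ω
    rw [h1, lintegral_tsum fun k => (measurable_const.indicator (hAmeas k)).aemeasurable]
    exact tsum_congr fun k => by
      rw [lintegral_indicator (hAmeas k) _]; simp
  -- key per-k bound
  have hkey : ∀ k, ENNReal.ofReal p * μ (A k) ≤ μ (A k ∩ S k) := by
    intro k
    have hg : Integrable ((E k).indicator fun _ => (1 : ℝ)) μ :=
      (integrable_const 1).indicator (hE k)
    have h1 : ∫ ω in A k, (μ[(E k).indicator (fun _ => (1 : ℝ)) | ℱ k]) ω ∂μ
        = ∫ ω in A k, (E k).indicator (fun _ => (1 : ℝ)) ω ∂μ :=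
      setIntegral_condExp (ℱ.le k) hg (hAmeasF k)
    have h2 : p * (μ (A k)).toReal
        ≤ ∫ ω in A k, (μ[(E k).indicator (fun _ => (1 : ℝ)) | ℱ k]) ω ∂μ := by
      have := setIntegral_mono_ae_restrict (μ := μ) (s := A k)
        (integrable_const p).integrableOn
        integrable_condExp.integrableOn (ae_restrict_of_ae (hEp k))
      simpa [setIntegral_const, smul_eq_mul, mul_comm, Measure.real] using this
    have h3 : ∫ ω in A k, (E k).indicator (fun _ => (1 : ℝ)) ω ∂μ
        = (μ (A k ∩ E k)).toReal := by
      rw [setIntegral_indicator (hE k)]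
      simp [setIntegral_const, Measure.real]
    have h4 : μ (A k ∩ E k) ≤ μ (A k ∩ S k) := by
      apply measure_mono_ae
      filter_upwards [ha] with ω hω
      rintro ⟨⟨hkN, hW⟩, hE'⟩
      have hle := hω k hkN
      rw [hW, Set.indicator_of_mem hE'] at hle
      refine ⟨⟨hkN, hW⟩, ?_⟩
      by_contra hS'
      rw [Set.indicator_of_notMem hS'] at hle
      norm_num at hle
    have h5 : p * (μ (A k)).toReal ≤ (μ (A k ∩ S k)).toReal := by
      refine (h2.trans ?_).trans (ENNReal.toReal_mono (measure_ne_top μ _) h4)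
      rw [h1, h3]
    calc ENNReal.ofReal p * μ (A k)
        = ENNReal.ofReal (p * (μ (A k)).toReal) := by
          rw [ENNReal.ofReal_mul hp0.le, ENNReal.ofReal_toReal (measure_ne_top μ _)]
      _ ≤ ENNReal.ofReal ((μ (A k ∩ S k)).toReal) := ENNReal.ofReal_le_ofReal h5
      _ = μ (A k ∩ S k) := ENNReal.ofReal_toReal (measure_ne_top μ _)
  -- sum of successful small-radius iterations ≤ E[N]/2
  have hsum : ∑' k, μ (A k ∩ S k) ≤ (∫⁻ ω, (N ω : ℝ≥0∞) ∂μ) / 2 := by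
    have heq : ∑' k, μ (A k ∩ S k)
        = ∫⁻ ω, ∑' k, (A k ∩ S k).indicator (fun _ => (1 : ℝ≥0∞)) ω ∂μ := by
      rw [lintegral_tsum fun k =>
        (measurable_const.indicator ((hAmeas k).inter (hS k))).aemeasurable]
      exact tsum_congr fun k => by
        rw [lintegral_indicator ((hAmeas k).inter (hS k)) _]; simp
    rw [heq]
    have hle : ∀ᵐ ω ∂μ, ∑' k, (A k ∩ S k).indicator (fun _ => (1 : ℝ≥0∞)) ω
        ≤ (N ω : ℝ≥0∞) / 2 := by
      filter_upwards [hb] with ω hω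
      calc ∑' k, (A k ∩ S k).indicator (fun _ => (1 : ℝ≥0∞)) ω
          = ∑' (k : ℕ), ({ω' | (k : ℕ∞) < N ω'}.indicator (fun _ => (1 : ℝ≥0∞)) ω) *
              ENNReal.ofReal (W k ω) * ((S k).indicator (fun _ => (1 : ℝ≥0∞)) ω) :=
            tsum_congr fun k => (hpt2 k ω).symm
        _ ≤ (N ω : ℝ≥0∞) / 2 := hω
    calc ∫⁻ ω, ∑' k, (A k ∩ S k).indicator (fun _ => (1 : ℝ≥0∞)) ω ∂μ
        ≤ ∫⁻ ω, (N ω : ℝ≥0∞) / 2 ∂μ := lintegral_mono_ae hle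
      _ = (∫⁻ ω, (N ω : ℝ≥0∞) ∂μ) / 2 := by
          simp_rw [ENNReal.div_eq_inv_mul]
          rw [lintegral_const_mul' _ _ (by norm_num)]
  -- conclude
  rw [hLHS, ENNReal.le_div_iff_mul_le (Or.inl (by positivity)) (Or.inl ENNReal.ofReal_ne_top)]
  have hrw : (∑' k, μ (A k)) * ENNReal.ofReal (2 * p)
      = (ENNReal.ofReal p * ∑' k, μ (A k)) * 2 := by
    rw [ENNReal.ofReal_mul (by norm_num : (0:ℝ) ≤ 2)]
    norm_num
    ring
  rw [hrw]
  have hmain : ENNReal.ofReal p * ∑' k, μ (A k) ≤ (∫⁻ ω, (N ω : ℝ≥0∞) ∂μ) / 2 := by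
    rw [ENNReal.tsum_mul_left.symm]
    exact (ENNReal.tsum_le_tsum hkey).trans hsum
  calc (ENNReal.ofReal p * ∑' k, μ (A k)) * 2
      ≤ ((∫⁻ ω, (N ω : ℝ≥0∞) ∂μ) / 2) * 2 := mul_le_mul_left hmain 2
    _ = ∫⁻ ω, (N ω : ℝ≥0∞) ∂μ := ENNReal.div_mul_cancel (by norm_num) (by norm_num)
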